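/- For y ∈ Z_p, the formal power series (1+x)^y = Σ_{n≥0} C(y,n) x^n ∈ F_p[[x]] (binomial coefficients taken mod p) is a rational function of x if and only if y ∈ Z. -/

import Mathlib

open PowerSeries

/-- The `p`-adic binomial coefficient `C(y, n)` reduced mod `p`. -/
noncomputable def padicChoose {p : ℕ} [Fact p.Prime] (y : ℤ_[p]) (n : ℕ) : ZMod p :=
  ((y.appr (n + 1)).choose n : ZMod p)

/-- The formal power series `(1+x)^y = Σ C(y,n) xⁿ ∈ F_p[[x]]` for `y ∈ ℤ_p`. -/
noncomputable def padicBinomialSeries {p : ℕ} [Fact p.Prime] (y : ℤ_[p]) : PowerSeries (ZMod p) :=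
  PowerSeries.mk fun n => padicChoose y n

/-- A power series is rational if it equals `P/Q` for polynomials `P, Q`. -/
def IsRationalPS {R : Type*} [CommRing R] (f : PowerSeries R) : Prop :=
  ∃ P Q : Polynomial R, Q ≠ 0 ∧ (Q : PowerSeries R) * f = (P : PowerSeries R)

variable {p : ℕ} [Fact p.Prime]


theorem appr_unique (y : ℤ_[p]) (k : ℕ) (a : ℕ) (ha : a < p ^ k)
    (h : y - a ∈ Ideal.span {(p : ℤ_[p]) ^ k}) : y.appr k = a := by
  have h2 := PadicInt.zmod_congr_of_sub_mem_span k y (y.appr k) a (PadicInt.appr_spec k y) h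
  have := congrArg ZMod.val h2
  rwa [ZMod.val_natCast_of_lt (PadicInt.appr_lt y k), ZMod.val_natCast_of_lt ha] at this

/-- the "shift" `(y - y.appr 1)/p`. -/
noncomputable def pshift (y : ℤ_[p]) : ℤ_[p] :=
  Classical.choose (Ideal.mem_span_singleton.mp (PadicInt.appr_spec 1 y))

theorem pshift_spec (y : ℤ_[p]) : (p : ℤ_[p]) * pshift y = y - (y.appr 1 : ℕ) := by
  have h := Classical.choose_spec (Ideal.mem_span_singleton.mp (PadicInt.appr_spec 1 y))
  calc (p : ℤ_[p]) * pshift y = (p:ℤ_[p])^1 * pshift y := by rw [pow_one]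
    _ = y - (y.appr 1 : ℕ) := h.symm

theorem pshift_eq (y : ℤ_[p]) : y = (y.appr 1 : ℕ) + (p : ℤ_[p]) * pshift y := by
  rw [pshift_spec]; ring

theorem appr_one_lt (y : ℤ_[p]) : y.appr 1 < p := by simpa using PadicInt.appr_lt y 1

theorem appr_succ (y : ℤ_[p]) (k : ℕ) :
    y.appr (k + 1) = y.appr 1 + p * ((pshift y).appr k) := by
  have hp := (Fact.out : p.Prime).pos
  apply appr_unique
  · have h1 : y.appr 1 < p := appr_one_lt y
    have h2 : (pshift y).appr k < p ^ k := PadicInt.appr_lt _ k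
    calc y.appr 1 + p * ((pshift y).appr k) < p * (1 + (pshift y).appr k) := by
          rw [Nat.mul_add, mul_one]; omega
      _ ≤ p ^ (k+1) := by rw [pow_succ, mul_comm (p^k)]; exact Nat.mul_le_mul_left p (by omega)
  · have hs := PadicInt.appr_spec k (pshift y)
    rw [Ideal.mem_span_singleton] at hs ⊢
    obtain ⟨c, hc⟩ := hs
    refine ⟨c, ?_⟩
    have h3 : (pshift y : ℤ_[p]) - ((pshift y).appr k : ℕ) = (p:ℤ_[p]) ^ k * c := hc
    have h4 : (p:ℤ_[p]) * pshift y = y - (y.appr 1 : ℕ) := pshift_spec y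
    push_cast
    calc y - ((y.appr 1:ℕ) + (p:ℤ_[p]) * ((pshift y).appr k))
        = (p:ℤ_[p]) * pshift y - (p:ℤ_[p]) * ((pshift y).appr k) := by rw [h4]; ring
      _ = (p:ℤ_[p]) * ((pshift y) - ((pshift y).appr k)) := by ring
      _ = (p:ℤ_[p]) ^ (k+1) * c := by rw [h3]; ring

theorem lt_pow_succ (n : ℕ) : n < p ^ (n + 1) := by
  have h2 : 2 ≤ p := (Fact.out : p.Prime).two_le
  calc n < 2 ^ (n+1) := (Nat.lt_two_pow_self (n := n)).trans (Nat.pow_lt_pow_succ one_lt_two)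
    _ ≤ p ^ (n+1) := Nat.pow_le_pow_left h2 _

theorem choose_congr : ∀ (K a b n : ℕ), a ≡ b [MOD p ^ K] → n < p ^ K →
    ((a.choose n : ZMod p) = (b.choose n : ZMod p))
  | 0, a, b, n, _, hn => by
    simp only [pow_zero, Nat.lt_one_iff] at hn
    subst hn; simp
  | (K+1), a, b, n, h, hn => by
    have hp : 1 < p := (Fact.out : p.Prime).one_lt
    have la := (ZMod.natCast_eq_natCast_iff _ _ _).mpr
      (Choose.choose_modEq_choose_mod_mul_choose_div_nat (n := a) (k := n) (p := p))
    have lb := (ZMod.natCast_eq_natCast_iff _ _ _).mpr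
      (Choose.choose_modEq_choose_mod_mul_choose_div_nat (n := b) (k := n) (p := p))
    rw [la, lb, Nat.cast_mul, Nat.cast_mul]
    have hmod : a % p = b % p := Nat.ModEq.of_dvd (dvd_pow_self p (Nat.succ_ne_zero K)) h
    have hdiv : a / p ≡ b / p [MOD p ^ K] := by
      unfold Nat.ModEq
      rw [← Nat.mod_mul_right_div_self, ← Nat.mod_mul_right_div_self, ← pow_succ']
      exact congrArg (· / p) h
    have hn' : n / p < p ^ K := by
      rw [Nat.div_lt_iff_lt_mul (by omega)]
      calc n < p ^ (K+1) := hn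
        _ = p ^ K * p := by rw [pow_succ]
    rw [hmod, choose_congr K (a/p) (b/p) (n/p) hdiv hn']

theorem appr_modEq (y : ℤ_[p]) (a b : ℕ) (h : a ≤ b) :
    y.appr b ≡ y.appr a [MOD p ^ a] := by
  have hd := PadicInt.dvd_appr_sub_appr y a b h
  have hm := PadicInt.appr_mono y h
  exact ((Nat.modEq_iff_dvd' hm).mpr hd).symm

/-- `padicChoose y n` can be computed from any sufficiently good approximation. -/
theorem padicChoose_eq (y : ℤ_[p]) {n K : ℕ} (h : n < p ^ K) :
    padicChoose y n = (((y.appr K).choose n : ℕ) : ZMod p) := by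
  unfold padicChoose
  rcases le_total (n+1) K with hK | hK
  · exact choose_congr (n+1) _ _ n (appr_modEq y (n+1) K hK).symm (lt_pow_succ n)
  · exact choose_congr K _ _ n (appr_modEq y K (n+1) hK) h

theorem padicChoose_zero_right (y : ℤ_[p]) : padicChoose y 0 = 1 := by
  unfold padicChoose; simp

theorem padicChoose_mul_add (y : ℤ_[p]) (q r : ℕ) (hr : r < p) :
    padicChoose y (p * q + r) =
      ((y.appr 1).choose r : ZMod p) * padicChoose (pshift y) q := by
  have hp : 1 < p := (Fact.out : p.Prime).one_lt
  have hq : q < p ^ (q + 1) := lt_pow_succ q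
  have hn : p * q + r < p ^ (q + 2) := by
    calc p * q + r < p * (q + 1) := by rw [Nat.mul_add]; omega
      _ ≤ p * p ^ (q+1) := Nat.mul_le_mul_left p hq
      _ = p ^ (q+2) := by ring
  rw [padicChoose_eq y hn, padicChoose_eq (pshift y) hq]
  have lucas := (ZMod.natCast_eq_natCast_iff _ _ _).mpr
    (Choose.choose_modEq_choose_mod_mul_choose_div_nat
      (n := y.appr (q+2)) (k := p * q + r) (p := p))
  rw [lucas, Nat.cast_mul]
  have e1 : y.appr (q + 2) = y.appr 1 + p * ((pshift y).appr (q+1)) := appr_succ y (q+1)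
  have e2 : y.appr (q+2) % p = y.appr 1 := by
    rw [e1, Nat.add_mul_mod_self_left, Nat.mod_eq_of_lt (appr_one_lt y)]
  have e3 : y.appr (q+2) / p = (pshift y).appr (q+1) := by
    rw [e1, Nat.add_mul_div_left _ _ (by omega), Nat.div_eq_of_lt (appr_one_lt y), zero_add]
  have e4 : (p * q + r) % p = r := by rw [Nat.mul_add_mod, Nat.mod_eq_of_lt hr]
  have e5 : (p * q + r) / p = q := by
    rw [Nat.mul_add_div (by omega : 0 < p), Nat.div_eq_of_lt hr, Nat.add_zero]
  rw [e2, e3, e4, e5]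

/-- the `i`-th base-`p` digit of `y`. -/
noncomputable def pdigit (y : ℤ_[p]) (i : ℕ) : ℕ := (pshift^[i] y).appr 1

theorem pdigit_lt (y : ℤ_[p]) (i : ℕ) : pdigit y i < p := appr_one_lt _

theorem pdigit_pshift (y : ℤ_[p]) (i : ℕ) : pdigit (pshift y) i = pdigit y (i + 1) := by
  unfold pdigit
  rw [Function.iterate_succ_apply]

theorem padicChoose_pow (y : ℤ_[p]) (i : ℕ) :
    padicChoose y (p ^ i) = (pdigit y i : ZMod p) := by
  induction i generalizing y with
  | zero =>
    have hp : 1 < p := (Fact.out : p.Prime).one_lt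
    have h := padicChoose_mul_add y 0 1 hp
    simp only [Nat.mul_zero, Nat.zero_add] at h
    rw [pow_zero, h, padicChoose_zero_right, mul_one, Nat.choose_one_right]
    rfl
  | succ i ih =>
    have hp : 0 < p := (Fact.out : p.Prime).pos
    have h := padicChoose_mul_add y (p ^ i) 0 hp
    rw [Nat.add_zero] at h
    rw [pow_succ, mul_comm (p^i) p, h, ih, Nat.choose_zero_right, Nat.cast_one, one_mul,
      pdigit_pshift]

theorem padicChoose_tail (y : ℤ_[p]) (k n : ℕ) :
    padicChoose (pshift^[k] y) n = padicChoose y (p ^ k * n) := by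
  induction k generalizing y with
  | zero => simp
  | succ k ih =>
    have hp : 0 < p := (Fact.out : p.Prime).pos
    have h := padicChoose_mul_add y (p ^ k * n) 0 hp
    rw [Nat.add_zero, ← mul_assoc, ← pow_succ'] at h
    rw [Function.iterate_succ_apply, ih (pshift y), h, Nat.choose_zero_right, Nat.cast_one,
      one_mul]

theorem appr_zero (y : ℤ_[p]) : y.appr 0 = 0 := by
  have := PadicInt.appr_lt y 0
  simpa using this

theorem appr_succ' (y : ℤ_[p]) (k : ℕ) :
    y.appr (k + 1) = y.appr k + p ^ k * pdigit y k := by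
  induction k generalizing y with
  | zero => rw [appr_zero]; simp [pdigit]
  | succ k ih =>
    rw [appr_succ y (k+1), ih (pshift y), appr_succ y k, pdigit_pshift, Nat.mul_add,
      ← mul_assoc, ← pow_succ', Nat.add_assoc]

theorem pshift_decomp (y : ℤ_[p]) (k : ℕ) :
    y = ((y.appr k : ℕ) : ℤ_[p]) + (p : ℤ_[p]) ^ k * pshift^[k] y := by
  induction k generalizing y with
  | zero => simp [appr_zero]
  | succ k ih =>
    have h1 := ih y
    have h2 : (pshift^[k] y : ℤ_[p]) = ((pshift^[k] y).appr 1 : ℕ) + (p:ℤ_[p]) * pshift^[k+1] y := by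
      rw [Function.iterate_succ_apply']
      exact pshift_eq _
    rw [appr_succ' y k]
    push_cast
    calc y = ((y.appr k : ℕ) : ℤ_[p]) + (p : ℤ_[p]) ^ k * pshift^[k] y := h1
      _ = ((y.appr k : ℕ) : ℤ_[p]) + (p : ℤ_[p]) ^ k *
          (((pshift^[k] y).appr 1 : ℕ) + (p:ℤ_[p]) * pshift^[k+1] y) := by rw [← h2]
      _ = _ := by rw [show pdigit y k = (pshift^[k] y).appr 1 from rfl]; push_cast; ring

theorem pdigit_ext {y z : ℤ_[p]} (h : ∀ i, pdigit y i = pdigit z i) : y = z := by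
  have happr : ∀ k, y.appr k = z.appr k := by
    intro k
    induction k with
    | zero => rw [appr_zero, appr_zero]
    | succ k ih => rw [appr_succ', appr_succ', ih, h k]
  rw [← PadicInt.ext_of_toZModPow]
  intro n
  have h1 : y - z ∈ Ideal.span {(p:ℤ_[p])^n} := by
    have e1 := pshift_decomp y n
    have e2 := pshift_decomp z n
    rw [Ideal.mem_span_singleton]
    refine ⟨pshift^[n] y - pshift^[n] z, ?_⟩
    have hc : ((y.appr n : ℕ) : ℤ_[p]) = ((z.appr n : ℕ) : ℤ_[p]) := by rw [happr n]
    linear_combination e1 - e2 + hc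
  rw [← PadicInt.ker_toZModPow, RingHom.mem_ker, map_sub, sub_eq_zero] at h1
  exact h1

theorem padicChoose_natCast (M n : ℕ) :
    padicChoose ((M : ℕ) : ℤ_[p]) n = (M.choose n : ZMod p) := by
  set y : ℤ_[p] := ((M : ℕ) : ℤ_[p]) with hy
  have h1 : y - ((y.appr (n+1) : ℕ) : ℤ_[p]) ∈ Ideal.span {(p:ℤ_[p])^(n+1)} :=
    PadicInt.appr_spec (n+1) y
  have h2 : y - ((M : ℕ) : ℤ_[p]) ∈ Ideal.span {(p:ℤ_[p])^(n+1)} := by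
    simp [y]
  have h3 := PadicInt.zmod_congr_of_sub_mem_span (n+1) y (y.appr (n+1)) M h1 h2
  have h4 : y.appr (n+1) ≡ M [MOD p ^ (n+1)] := (ZMod.natCast_eq_natCast_iff _ _ _).mp h3
  exact choose_congr (n+1) _ _ n h4 (lt_pow_succ n)

theorem binomialSeries_mul (a b : ℤ_[p]) :
    padicBinomialSeries a * padicBinomialSeries b = padicBinomialSeries (a + b) := by
  ext n
  rw [PowerSeries.coeff_mul]
  simp only [padicBinomialSeries, PowerSeries.coeff_mk]
  have key : padicChoose (a + b) n =
      (((a.appr (n+1) + b.appr (n+1)).choose n : ℕ) : ZMod p) := by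
    have h1 := PadicInt.appr_spec (n+1) (a + b)
    have h2 : (a + b) - ((a.appr (n+1) + b.appr (n+1) : ℕ) : ℤ_[p]) ∈
        Ideal.span {(p:ℤ_[p])^(n+1)} := by
      have ha := PadicInt.appr_spec (n+1) a
      have hb := PadicInt.appr_spec (n+1) b
      have := Ideal.add_mem _ ha hb
      push_cast
      convert this using 1
      ring
    have h3 := PadicInt.zmod_congr_of_sub_mem_span (n+1) (a+b) ((a+b).appr (n+1))
      (a.appr (n+1) + b.appr (n+1)) h1 h2
    have h4 := (ZMod.natCast_eq_natCast_iff _ _ _).mp h3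
    exact choose_congr (n+1) _ _ n h4 (lt_pow_succ n)
  rw [key, Nat.add_choose_eq, Nat.cast_sum]
  apply Finset.sum_congr rfl
  rintro ⟨i, j⟩ hij
  rw [Finset.HasAntidiagonal.mem_antidiagonal] at hij
  have hi : i < p ^ (n+1) := lt_of_le_of_lt (by omega) (lt_pow_succ n)
  have hj : j < p ^ (n+1) := lt_of_le_of_lt (by omega) (lt_pow_succ n)
  rw [padicChoose_eq a hi, padicChoose_eq b hj, Nat.cast_mul]

theorem padicChoose_zero_left (n : ℕ) : padicChoose (0 : ℤ_[p]) n = if n = 0 then 1 else 0 := by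
  have h := padicChoose_natCast (p := p) 0 n
  rw [Nat.cast_zero] at h
  rw [h]
  rcases n with _ | n
  · simp
  · simp [Nat.choose_eq_zero_of_lt (Nat.succ_pos n)]

theorem binomialSeries_zero : padicBinomialSeries (0 : ℤ_[p]) = 1 := by
  ext n
  simp only [padicBinomialSeries, PowerSeries.coeff_mk, padicChoose_zero_left, PowerSeries.coeff_one]

theorem binomialSeries_natCast (M : ℕ) :
    padicBinomialSeries ((M : ℕ) : ℤ_[p]) =
      (((Polynomial.X + 1) ^ M : Polynomial (ZMod p)) : PowerSeries (ZMod p)) := by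
  ext n
  rw [Polynomial.coeff_coe, Polynomial.coeff_X_add_one_pow]
  simp only [padicBinomialSeries, PowerSeries.coeff_mk, padicChoose_natCast]

theorem isRational_of_int (y : ℤ_[p]) (m : ℤ) (h : y = (m : ℤ_[p])) :
    IsRationalPS (padicBinomialSeries y) := by
  have hQ : ∀ s : ℕ, ((Polynomial.X + 1) ^ s : Polynomial (ZMod p)) ≠ 0 :=
    fun s => ((Polynomial.monic_X_add_C 1).pow s).ne_zero
  rcases le_or_gt 0 m with hm | hm
  · obtain ⟨M, rfl⟩ := Int.eq_ofNat_of_zero_le hm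
    refine ⟨(Polynomial.X + 1) ^ M, 1, one_ne_zero, ?_⟩
    push_cast at h
    rw [Polynomial.coe_one, one_mul, h, binomialSeries_natCast]
  · set s : ℕ := m.natAbs with hs
    refine ⟨1, (Polynomial.X + 1) ^ s, hQ s, ?_⟩
    have hsum : ((s : ℕ) : ℤ_[p]) + y = 0 := by
      rw [h]
      have hms : (m : ℤ) = -(s : ℤ) := by
        rw [hs, Int.ofNat_natAbs_of_nonpos (le_of_lt hm)]; ring
      have : (m : ℤ_[p]) = -((s:ℕ) : ℤ_[p]) := by
        rw [hms]; push_cast; ring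
      rw [this]; ring
    rw [← binomialSeries_natCast, binomialSeries_mul, hsum, _root_.binomialSeries_zero,
      Polynomial.coe_one]

theorem eventually_periodic_of_rational {K : Type*} [Field K] [Finite K]
    {f : PowerSeries K} (h : IsRationalPS f) :
    ∃ T N : ℕ, 1 ≤ T ∧ ∀ n, N ≤ n → (PowerSeries.coeff (n + T)) f = (PowerSeries.coeff n) f := by
  classical
  obtain ⟨P, Q, hQ, hQf⟩ := h
  set c : ℕ → K := fun n => PowerSeries.coeff n f with hc
  set τ := Q.natTrailingDegree with hτ
  set d := Q.natDegree with hd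
  set L := d - τ with hL
  set N₀ := P.natDegree + 1 with hN₀
  have hτd : τ ≤ d := Polynomial.natTrailingDegree_le_natDegree Q
  have hdL : d = τ + L := by omega
  have hQτ : Q.coeff τ ≠ 0 := by
    rw [hτ, ← Polynomial.trailingCoeff]
    exact Polynomial.trailingCoeff_nonzero_iff_nonzero.mpr hQ
  have hrecQ : ∀ n, N₀ ≤ n →
      c (n + L) = -(Q.coeff τ)⁻¹ * ∑ k ∈ Finset.Icc (τ+1) d, Q.coeff k * c (n + L + τ - k) := by
    intro n hn
    set m := n + L + τ with hm
    have h0 : (PowerSeries.coeff m) ((Q : PowerSeries K) * f) = 0 := by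
      rw [hQf, Polynomial.coeff_coe]
      exact Polynomial.coeff_eq_zero_of_natDegree_lt (by omega)
    rw [PowerSeries.coeff_mul] at h0
    rw [Finset.Nat.sum_antidiagonal_eq_sum_range_succ_mk] at h0
    simp only [Polynomial.coeff_coe] at h0
    have hsplit : ∑ k ∈ Finset.range (m+1), Q.coeff k * c (m - k)
        = ∑ k ∈ Finset.Icc τ d, Q.coeff k * c (m - k) := by
      refine (Finset.sum_subset ?_ ?_).symm
      · intro k hk
        rw [Finset.mem_Icc] at hk
        rw [Finset.mem_range]
        omega
      · intro k _ hk
        rw [Finset.mem_Icc] at hk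
        have : Q.coeff k = 0 := by
          rcases Nat.lt_or_ge k τ with h' | h'
          · exact Polynomial.coeff_eq_zero_of_lt_natTrailingDegree h'
          · exact Polynomial.coeff_eq_zero_of_natDegree_lt (by omega)
        rw [this, zero_mul]
    rw [hsplit] at h0
    rw [show Finset.Icc τ d = insert τ (Finset.Icc (τ+1) d) by
        ext k; simp only [Finset.mem_Icc, Finset.mem_insert]; omega] at h0
    rw [Finset.sum_insert (by simp)] at h0
    have hmτ : m - τ = n + L := by omega
    rw [hmτ] at h0
    have h1 : Q.coeff τ * c (n + L) = -∑ k ∈ Finset.Icc (τ+1) d, Q.coeff k * c (m - k) := by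
      linear_combination h0
    calc c (n + L) = (Q.coeff τ)⁻¹ * (Q.coeff τ * c (n + L)) := by
          rw [← mul_assoc, inv_mul_cancel₀ hQτ, one_mul]
      _ = -(Q.coeff τ)⁻¹ * ∑ k ∈ Finset.Icc (τ+1) d, Q.coeff k * c (m - k) := by
          rw [h1]; ring
  -- state machine
  set ext : (Fin (L+1) → K) → ℕ → K := fun w j => if h : j < L + 1 then w ⟨j, h⟩ else 0 with hext
  set step : (Fin (L+1) → K) → (Fin (L+1) → K) := fun w i =>
    if h : (i:ℕ) + 1 < L + 1 then w ⟨(i:ℕ)+1, h⟩ else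
      -(Q.coeff τ)⁻¹ * ∑ k ∈ Finset.Icc (τ+1) d, Q.coeff k * ext w (L + τ + 1 - k) with hstepdef
  set v : ℕ → (Fin (L+1) → K) := fun n i => c (N₀ + n + (i:ℕ)) with hv
  have hstep : ∀ n, v (n + 1) = step (v n) := by
    intro n
    funext i
    by_cases hi : (i:ℕ) + 1 < L + 1
    · show c (N₀ + (n+1) + (i:ℕ)) = _
      rw [hstepdef]
      simp only [hi, dif_pos]
      show _ = c (N₀ + n + ((i:ℕ)+1))
      congr 1
      omega
    · have hiL : (i:ℕ) = L := by have := i.isLt; omega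
      show c (N₀ + (n+1) + (i:ℕ)) = _
      rw [hstepdef]
      simp only [hi, dif_neg, not_false_iff]
      have hrec := hrecQ (N₀ + n + 1) (by omega)
      have e1 : N₀ + (n+1) + (i:ℕ) = N₀ + n + 1 + L := by omega
      rw [e1, hrec]
      congr 1
      apply Finset.sum_congr rfl
      intro k hk
      rw [Finset.mem_Icc] at hk
      congr 1
      have hk2 : L + τ + 1 - k < L + 1 := by omega
      rw [hext]
      simp only [hk2, dif_pos]
      show c (N₀ + n + 1 + L + τ - k) = c (N₀ + n + (L + τ + 1 - k))
      congr 1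
      omega
  obtain ⟨a, b, hab, hvab⟩ := Finite.exists_ne_map_eq_of_infinite v
  rcases Nat.lt_or_ge a b with h' | h'
  case _ =>
    have hdet : ∀ k, v (a + k) = v (b + k) := by
      intro k
      induction k with
      | zero => simpa using hvab
      | succ k ih => rw [← Nat.add_assoc, ← Nat.add_assoc, hstep, hstep, ih]
    refine ⟨b - a, N₀ + a, by omega, ?_⟩
    intro n hn
    have := congrFun (hdet (n - (N₀ + a))) ⟨0, by omega⟩
    calc c (n + (b-a)) = c (N₀ + (b + (n - (N₀ + a))) + (0:ℕ)) := by congr 1; omega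
      _ = c (N₀ + (a + (n - (N₀ + a))) + (0:ℕ)) := this.symm
      _ = c n := by congr 1; omega
  case _ =>
    have hba : b < a := by omega
    have hdet : ∀ k, v (b + k) = v (a + k) := by
      intro k
      induction k with
      | zero => simpa using hvab.symm
      | succ k ih => rw [← Nat.add_assoc, ← Nat.add_assoc, hstep, hstep, ih]
    refine ⟨a - b, N₀ + b, by omega, ?_⟩
    intro n hn
    have := congrFun (hdet (n - (N₀ + b))) ⟨0, by omega⟩
    calc c (n + (a-b)) = c (N₀ + (a + (n - (N₀ + b))) + (0:ℕ)) := by congr 1; omega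
      _ = c (N₀ + (b + (n - (N₀ + b))) + (0:ℕ)) := this.symm
      _ = c n := by congr 1; omega

theorem padicChoose_block (t : ℕ) (w : ℤ_[p]) (q r : ℕ) (hr : r < p ^ t) :
    padicChoose w (p ^ t * q + r) = padicChoose w r * padicChoose (pshift^[t] w) q := by
  induction t generalizing w q r with
  | zero =>
    simp only [pow_zero, Nat.lt_one_iff] at hr
    subst hr
    simp [padicChoose_zero_right]
  | succ t ih =>
    have hp : 0 < p := (Fact.out : p.Prime).pos
    have hrp : r % p < p := Nat.mod_lt _ hp
    have hrd : r / p < p ^ t := by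
      rw [Nat.div_lt_iff_lt_mul hp]
      calc r < p ^ (t+1) := hr
        _ = p ^ t * p := by rw [pow_succ]
    have e1 : p ^ (t+1) * q + r = p * (p ^ t * q + r / p) + r % p := by
      have hdm : r = p * (r/p) + r % p := (Nat.div_add_mod r p).symm
      conv_lhs => rw [hdm]
      ring
    have e2 : r = p * (r / p) + r % p := (Nat.div_add_mod r p).symm
    rw [e1, padicChoose_mul_add w _ _ hrp, ih (pshift w) q (r/p) hrd]
    conv_rhs => rw [e2, padicChoose_mul_add w _ _ hrp]
    rw [Function.iterate_succ_apply]
    ring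

theorem padicChoose_pred_pow_eq_zero : ∀ (l : ℕ) (w : ℤ_[p]),
    (∃ j, j < l ∧ pdigit w j < p - 1) → padicChoose w (p ^ l - 1) = 0
  | 0, w, h => by omega
  | (l+1), w, h => by
    have hp : 1 < p := (Fact.out : p.Prime).one_lt
    have e1 : p ^ (l+1) - 1 = p * (p ^ l - 1) + (p - 1) := by
      have h1 : 1 ≤ p ^ l := Nat.one_le_pow _ _ (by omega)
      have h2 : p * p ^ l = p ^ (l+1) := (pow_succ' p l).symm
      have h3 : p ≤ p * p ^ l := Nat.le_mul_of_pos_right p (Nat.pow_pos (by omega))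
      rw [Nat.mul_sub]
      omega
    have hplt : p - 1 < p := by omega
    rw [e1, padicChoose_mul_add w (p ^ l - 1) (p - 1) hplt]
    obtain ⟨j, hj, hdj⟩ := h
    cases j with
    | zero =>
      have h0 : w.appr 1 = pdigit w 0 := rfl
      rw [h0, Nat.choose_eq_zero_of_lt hdj, Nat.cast_zero, zero_mul]
    | succ j =>
      have hdj' : pdigit (pshift w) j < p - 1 := by rw [pdigit_pshift]; exact hdj
      have hjl : j < l := Nat.lt_of_succ_lt_succ hj
      rw [padicChoose_pred_pow_eq_zero l (pshift w) ⟨j, hjl, hdj'⟩, mul_zero]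

theorem pdigit_iterate (y : ℤ_[p]) (k i : ℕ) : pdigit (pshift^[k] y) i = pdigit y (k + i) := by
  unfold pdigit
  rw [← Function.iterate_add_apply, Nat.add_comm i k]

theorem natCast_zmod_eq_iff (a b : ℕ) (ha : a < p) (hb : b < p) :
    (a : ZMod p) = (b : ZMod p) ↔ a = b := by
  constructor
  · intro h
    have := congrArg ZMod.val h
    rwa [ZMod.val_natCast_of_lt ha, ZMod.val_natCast_of_lt hb] at this
  · intro h; rw [h]

theorem pow_growth (a b C : ℕ) (ha : 1 ≤ a) (hab : a < b) : ∃ m, C * a ^ m ≤ b ^ m := by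
  have key : ∀ m, (a + m) * a ^ m ≤ a * (a + 1) ^ m := by
    intro m
    induction m with
    | zero => simp
    | succ m ih =>
      have h2 : a * a ^ m ≤ (a + m) * a ^ m := Nat.mul_le_mul_right _ (by omega)
      calc (a + (m+1)) * a ^ (m+1) = ((a+m) * a ^ m) * a + a * a ^ m := by ring
        _ ≤ ((a+m) * a ^ m) * a + (a+m) * a ^ m := by omega
        _ = ((a + m) * a ^ m) * (a + 1) := by ring
        _ ≤ (a * (a + 1) ^ m) * (a+1) := Nat.mul_le_mul_right _ ih
        _ = a * (a+1) ^ (m+1) := by ring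

  refine ⟨C * a, ?_⟩
  have h2 := key (C * a)
  have h3 : C * (a * a ^ (C * a)) ≤ (a + C * a) * a ^ (C * a) := by
    have : C * a ≤ a + C * a := by omega
    calc C * (a * a ^ (C*a)) = (C * a) * a ^ (C*a) := by ring
      _ ≤ (a + C * a) * a ^ (C*a) := Nat.mul_le_mul_right _ this
  have h4 : C * (a * a ^ (C * a)) ≤ a * (a+1) ^ (C*a) := le_trans h3 h2
  have h5 : a * (C * a ^ (C*a)) ≤ a * (a+1)^(C*a) := by
    calc a * (C * a ^ (C*a)) = C * (a * a ^ (C*a)) := by ring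
      _ ≤ a * (a+1)^(C*a) := h4
  have h6 : C * a ^ (C*a) ≤ (a+1) ^ (C*a) := Nat.le_of_mul_le_mul_left h5 (by omega)
  calc C * a ^ (C * a) ≤ (a+1) ^ (C*a) := h6
    _ ≤ b ^ (C*a) := Nat.pow_le_pow_left (by omega) _

theorem counting_contra (z : ℤ_[p]) (t T N : ℕ) (ht : 1 ≤ t) (hT : 1 ≤ T)
    (hfix : pshift^[t] z = z)
    (hper : ∀ n, N ≤ n → ∀ j, padicChoose z (n + j * T) = padicChoose z n)
    (r s : ℕ) (hr : pdigit z r ≠ 0) (hst : s < t) (hs : pdigit z s < p - 1) : False := by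
  classical
  have hp2 : 2 ≤ p := (Fact.out : p.Prime).two_le
  have hpt2 : 2 ≤ p ^ t := by
    calc 2 ≤ p := hp2
      _ = p ^ 1 := (pow_one p).symm
      _ ≤ p ^ t := Nat.pow_le_pow_right (by omega) ht
  have hdperi : ∀ i, pdigit z (i + t) = pdigit z i := by
    intro i
    have h1 := pdigit_iterate z t i
    rw [hfix] at h1
    rw [Nat.add_comm]
    exact h1.symm
  have hdper : ∀ q i, pdigit z (i + q * t) = pdigit z i := by
    intro q
    induction q with
    | zero => intro i; simp
    | succ q ih =>
      intro i
      have : i + (q+1) * t = (i + q * t) + t := by ring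
      rw [this, hdperi, ih]
  have hmul : ∀ q r', r' < p ^ t →
      padicChoose z (p ^ t * q + r') = padicChoose z r' * padicChoose z q := by
    intro q r' hr'
    have := padicChoose_block t z q r' hr'
    rwa [hfix] at this
  have hzero : padicChoose z (p ^ t - 1) = 0 :=
    padicChoose_pred_pow_eq_zero t z ⟨s, hst, hs⟩
  -- the nonzero base point
  set i₀ := r + (N + 1) * t with hi₀
  have hi₀N : N < i₀ := by
    have : N + 1 ≤ (N+1) * t := Nat.le_mul_of_pos_right _ (by omega)
    omega
  set n₀ := p ^ i₀ with hn₀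
  have hn₀N : N ≤ n₀ := by
    have h1 : i₀ < 2 ^ i₀ := Nat.lt_two_pow_self (n := i₀)
    have h2 : 2 ^ i₀ ≤ p ^ i₀ := Nat.pow_le_pow_left hp2 _
    omega
  have hdig : pdigit z i₀ = pdigit z r := hdper (N+1) r
  have hne : padicChoose z n₀ ≠ 0 := by
    rw [hn₀, padicChoose_pow, hdig]
    intro hcast
    have h0 : ((pdigit z r : ℕ) : ZMod p) = ((0 : ℕ) : ZMod p) := by
      rw [hcast]; simp
    exact hr ((natCast_zmod_eq_iff _ _ (pdigit_lt z r) (by omega)).mp h0)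
  -- counting sets
  set S : ℕ → Finset ℕ :=
    fun m => (Finset.range (p ^ (t * m))).filter (fun n => padicChoose z n ≠ 0) with hS
  set A := p ^ t - 1 with hA
  have hA1 : 1 ≤ A := by omega
  have hupper : ∀ m, (S m).card ≤ A ^ m := by
    intro m
    induction m with
    | zero =>
      have : S 0 ⊆ Finset.range 1 := by
        rw [hS]; simp only [Nat.mul_zero, pow_zero]
        exact Finset.filter_subset _ _
      calc (S 0).card ≤ (Finset.range 1).card := Finset.card_le_card this
        _ = 1 := Finset.card_range 1
        _ = A ^ 0 := (pow_zero A).symm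
    | succ m ih =>
      have hS1 : (S 1).card ≤ A := by
        have hsub : S 1 ⊆ (Finset.range (p ^ t)).erase (p ^ t - 1) := by
          intro n hn
          rw [hS, Finset.mem_filter, Finset.mem_range] at hn
          rw [Finset.mem_erase, Finset.mem_range]
          refine ⟨?_, by rw [Nat.mul_one] at hn; exact hn.1⟩
          intro hcontra
          exact hn.2 (hcontra ▸ hzero)
        calc (S 1).card ≤ ((Finset.range (p ^ t)).erase (p ^ t - 1)).card :=
              Finset.card_le_card hsub
          _ = p ^ t - 1 := by
              rw [Finset.card_erase_of_mem (Finset.mem_range.mpr (by omega)), Finset.card_range]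
          _ = A := rfl
      have hmap : ∀ n ∈ S (m+1), (n % p ^ t, n / p ^ t) ∈ (S 1) ×ˢ (S m) := by
        intro n hn
        rw [hS, Finset.mem_filter, Finset.mem_range] at hn
        obtain ⟨hlt, hnz⟩ := hn
        have hdm : p ^ t * (n / p ^ t) + n % p ^ t = n := Nat.div_add_mod n (p ^ t)
        have hmod : n % p ^ t < p ^ t := Nat.mod_lt _ (by omega)
        have hfac : padicChoose z (n % p ^ t) * padicChoose z (n / p ^ t) ≠ 0 := by
          rw [← hmul _ _ hmod, hdm]; exact hnz
        have hdiv : n / p ^ t < p ^ (t * m) := by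
          rw [Nat.div_lt_iff_lt_mul (by omega : 0 < p ^ t)]
          calc n < p ^ (t * (m+1)) := hlt
            _ = p ^ (t * m) * p ^ t := by rw [← pow_add, Nat.mul_succ]
        rw [Finset.mem_product, hS]
        constructor
        · rw [Finset.mem_filter, Finset.mem_range, Nat.mul_one]
          exact ⟨hmod, fun hc => hfac (by rw [hc, zero_mul])⟩
        · rw [Finset.mem_filter, Finset.mem_range]
          exact ⟨hdiv, fun hc => hfac (by rw [hc, mul_zero])⟩
      have hinj : Set.InjOn (fun n => (n % p ^ t, n / p ^ t)) (S (m+1)) := by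
        intro n₁ _ n₂ _ heq
        have h1 : n₁ % p ^ t = n₂ % p ^ t := congrArg Prod.fst heq
        have h2 : n₁ / p ^ t = n₂ / p ^ t := congrArg Prod.snd heq
        have e1 : p ^ t * (n₁ / p ^ t) + n₁ % p ^ t = n₁ := Nat.div_add_mod n₁ (p ^ t)
        have e2 : p ^ t * (n₂ / p ^ t) + n₂ % p ^ t = n₂ := Nat.div_add_mod n₂ (p ^ t)
        rw [← e1, ← e2, h1, h2]
      calc (S (m+1)).card ≤ ((S 1) ×ˢ (S m)).card := Finset.card_le_card_of_injOn _ hmap hinj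
        _ = (S 1).card * (S m).card := Finset.card_product _ _
        _ ≤ A * A ^ m := Nat.mul_le_mul hS1 ih
        _ = A ^ (m+1) := (pow_succ' A m).symm
  have hlower : ∀ m M, n₀ + M * T ≤ p ^ (t * m) → M ≤ (S m).card := by
    intro m M hM
    have hmap : ∀ jj ∈ Finset.range M, n₀ + jj * T ∈ S m := by
      intro jj hjj
      rw [Finset.mem_range] at hjj
      rw [hS, Finset.mem_filter, Finset.mem_range]
      constructor
      · have : jj * T < M * T := (Nat.mul_lt_mul_right (show 0 < T by omega)).mpr hjj
        omega
      · rw [hper n₀ hn₀N jj]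
        exact hne
    have hinj : Set.InjOn (fun jj => n₀ + jj * T) (Finset.range M) := by
      intro j₁ _ j₂ _ heq
      simp only at heq
      have : j₁ * T = j₂ * T := by omega
      exact Nat.eq_of_mul_eq_mul_right (by omega) this
    calc M = (Finset.range M).card := (Finset.card_range M).symm
      _ ≤ (S m).card := Finset.card_le_card_of_injOn _ hmap hinj
  obtain ⟨m, hm⟩ := pow_growth A (p ^ t) (n₀ + 2 * T) hA1 (by omega)
  have hAm1 : 1 ≤ A ^ m := Nat.one_le_pow _ _ (by omega)
  have hc1 : n₀ ≤ n₀ * A ^ m := Nat.le_mul_of_pos_right _ (by omega)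
  have hc2 : T ≤ T * A ^ m := Nat.le_mul_of_pos_right _ (by omega)
  have hc3 : (n₀ + 2 * T) * A ^ m = n₀ * A ^ m + 2 * (T * A ^ m) := by ring
  have hc4 : (A ^ m + 1) * T = T * A ^ m + T := by ring
  have hptm : (p ^ t) ^ m = p ^ (t * m) := by rw [← pow_mul]
  have hMle : n₀ + (A ^ m + 1) * T ≤ p ^ (t * m) := by
    rw [hc4]
    rw [hptm] at hm
    omega
  have := hlower m (A ^ m + 1) hMle
  have := hupper m
  omega

theorem padic_p_ne_zero : ((p : ℤ_[p])) ≠ 0 := by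
  have h := (Fact.out : p.Prime).pos
  exact Nat.cast_ne_zero.mpr (by omega)

theorem appr_of_zero (k : ℕ) : (0 : ℤ_[p]).appr k = 0 := by
  apply appr_unique
  · exact Nat.pow_pos (Fact.out : p.Prime).pos
  · simp

theorem pshift_zero : pshift (0 : ℤ_[p]) = 0 := by
  have h := pshift_spec (0 : ℤ_[p])
  rw [appr_of_zero] at h
  simp only [Nat.cast_zero, sub_zero, zero_sub, neg_zero] at h
  rcases mul_eq_zero.mp h with h' | h'
  · exact absurd h' padic_p_ne_zero
  · exact h'

theorem pdigit_zero (i : ℕ) : pdigit (0 : ℤ_[p]) i = 0 := by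
  unfold pdigit
  rw [Function.iterate_fixed pshift_zero i, appr_of_zero]

theorem appr_one_neg_one : (-1 : ℤ_[p]).appr 1 = p - 1 := by
  have hp : 1 < p := (Fact.out : p.Prime).one_lt
  apply appr_unique
  · rw [pow_one]; omega
  · rw [Ideal.mem_span_singleton]
    refine ⟨-1, ?_⟩
    have : ((p - 1 : ℕ) : ℤ_[p]) = (p : ℤ_[p]) - 1 := by
      push_cast [Nat.cast_sub (by omega : 1 ≤ p)]
      ring
    rw [this, pow_one]
    ring

theorem pshift_neg_one : pshift (-1 : ℤ_[p]) = -1 := by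
  have hp : 1 < p := (Fact.out : p.Prime).one_lt
  have h := pshift_spec (-1 : ℤ_[p])
  rw [appr_one_neg_one] at h
  have hc : ((p - 1 : ℕ) : ℤ_[p]) = (p : ℤ_[p]) - 1 := by
    push_cast [Nat.cast_sub (by omega : 1 ≤ p)]
    ring
  rw [hc] at h
  have h2 : (p : ℤ_[p]) * pshift (-1 : ℤ_[p]) = (p : ℤ_[p]) * (-1) := by
    rw [h]; ring
  exact mul_left_cancel₀ padic_p_ne_zero h2

theorem pdigit_neg_one (i : ℕ) : pdigit (-1 : ℤ_[p]) i = p - 1 := by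
  unfold pdigit
  rw [Function.iterate_fixed pshift_neg_one i]
  exact appr_one_neg_one

theorem int_of_rational (y : ℤ_[p]) (h : IsRationalPS (padicBinomialSeries y)) :
    ∃ m : ℤ, y = (m : ℤ_[p]) := by
  have hp : 1 < p := (Fact.out : p.Prime).one_lt
  obtain ⟨T, N, hT, hper1⟩ := eventually_periodic_of_rational h
  have hco : ∀ n, (PowerSeries.coeff n) (padicBinomialSeries y) = padicChoose y n :=
    fun n => PowerSeries.coeff_mk _ _
  have hper : ∀ n, N ≤ n → ∀ j, padicChoose y (n + j * T) = padicChoose y n := by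
    intro n hn j
    induction j with
    | zero => simp
    | succ j ih =>
      have e : n + (j+1) * T = (n + j * T) + T := by ring
      have h1 := hper1 (n + j * T) (by omega)
      rw [hco, hco] at h1
      rw [e, h1, ih]
  -- decompose T
  set a := T.factorization p with ha
  set u := T / p ^ a with hu
  have hTne : T ≠ 0 := by omega
  have hTfac : p ^ a * u = T := Nat.ordProj_mul_ordCompl_eq_self T p
  have hu_pos : 0 < u := Nat.ordCompl_pos p hTne
  have hpu : ¬ p ∣ u := Nat.not_dvd_ordCompl (Fact.out : p.Prime) hTne
  set t := u.totient with htdef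
  have ht : 1 ≤ t := Nat.totient_pos.mpr hu_pos
  have hcop : Nat.Coprime p u := ((Fact.out : p.Prime).coprime_iff_not_dvd).mpr hpu
  have hptpos : 1 ≤ p ^ t := Nat.one_le_pow _ _ (by omega)
  have hudvd : u ∣ p ^ t - 1 :=
    (Nat.modEq_iff_dvd' hptpos).mp (Nat.ModEq.pow_totient hcop).symm
  set k := a + N with hk
  have hdig_per : ∀ i, k ≤ i → pdigit y (i + t) = pdigit y i := by
    intro i hi
    have hTdvd : T ∣ p ^ i * (p ^ t - 1) := by
      rw [← hTfac]
      exact mul_dvd_mul (pow_dvd_pow p (by omega)) hudvd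
    obtain ⟨j, hj⟩ := hTdvd
    have hNpi : N ≤ p ^ i := by
      have h1 : i < 2 ^ i := Nat.lt_two_pow_self (n := i)
      have h2 : 2 ^ i ≤ p ^ i := Nat.pow_le_pow_left (by omega) _
      omega
    have hsplit : p ^ (i + t) = p ^ i + j * T := by
      have e1 : p ^ (i+t) = p ^ i * p ^ t := pow_add p i t
      have e2 : p ^ i * p ^ t = p ^ i * (p ^ t - 1) + p ^ i := by
        rw [Nat.mul_sub, Nat.mul_one]
        have : p ^ i ≤ p ^ i * p ^ t := Nat.le_mul_of_pos_right _ (by omega)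
        omega
      rw [e1, e2, hj]
      ring
    have hc : padicChoose y (p ^ (i+t)) = padicChoose y (p ^ i) := by
      rw [hsplit]
      exact hper (p ^ i) hNpi j
    rw [padicChoose_pow, padicChoose_pow] at hc
    exact (natCast_zmod_eq_iff _ _ (pdigit_lt y (i+t)) (pdigit_lt y i)).mp hc
  set z := pshift^[k] y with hz
  have hzdig : ∀ i, pdigit z i = pdigit y (k + i) := fun i => pdigit_iterate y k i
  have hzper : ∀ i, pdigit z (i + t) = pdigit z i := by
    intro i
    rw [hzdig, hzdig]
    have e : k + (i + t) = (k + i) + t := by ring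
    rw [e]
    exact hdig_per (k + i) (by omega)
  have hzperq : ∀ q i, pdigit z (i + q * t) = pdigit z i := by
    intro q
    induction q with
    | zero => intro i; simp
    | succ q ih =>
      intro i
      have e : i + (q+1) * t = (i + q * t) + t := by ring
      rw [e, hzper, ih]
  have hzperfull : ∀ i, pdigit z i = pdigit z (i % t) := by
    intro i
    conv_lhs => rw [show i = i % t + (i / t) * t by rw [Nat.mod_add_div']]
    rw [hzperq]
  have hfix : pshift^[t] z = z := by
    apply pdigit_ext
    intro i
    rw [pdigit_iterate]
    rw [show t + i = i + t by ring]
    exact hzper i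
  have hdecomp := pshift_decomp y k
  by_cases hall0 : ∀ i, i < t → pdigit z i = 0
  · have hz0 : z = 0 := by
      apply pdigit_ext
      intro i
      rw [hzperfull i, pdigit_zero]
      exact hall0 (i % t) (Nat.mod_lt _ (by omega))
    rw [← hz, hz0] at hdecomp
    refine ⟨(y.appr k : ℤ), ?_⟩
    conv_lhs => rw [hdecomp]
    push_cast
    ring
  by_cases hallp : ∀ i, i < t → pdigit z i = p - 1
  · have hzm1 : z = -1 := by
      apply pdigit_ext
      intro i
      rw [hzperfull i, pdigit_neg_one]
      exact hallp (i % t) (Nat.mod_lt _ (by omega))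
    rw [← hz, hzm1] at hdecomp
    refine ⟨(y.appr k : ℤ) - (p : ℤ) ^ k, ?_⟩
    conv_lhs => rw [hdecomp]
    push_cast
    ring
  · exfalso
    push_neg at hall0 hallp
    obtain ⟨r, hrt, hr⟩ := hall0
    obtain ⟨s, hst, hs⟩ := hallp
    have hs' : pdigit z s < p - 1 := by
      have := pdigit_lt z s
      omega
    have hzcper : ∀ n, N ≤ n → ∀ j, padicChoose z (n + j * T) = padicChoose z n := by
      intro n hn j
      rw [hz, padicChoose_tail, padicChoose_tail]
      have e : p ^ k * (n + j * T) = p ^ k * n + (j * p ^ k) * T := by ring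
      rw [e]
      have hpk1 : 1 ≤ p ^ k := Nat.one_le_pow _ _ (by omega)
      have hnn : N ≤ p ^ k * n := by
        have : n ≤ p ^ k * n := Nat.le_mul_of_pos_left _ (by omega)
        omega
      exact hper (p ^ k * n) hnn (j * p ^ k)
    exact counting_contra z t T N ht hT hfix hzcper r s hr hst hs'


/-- For `y ∈ ℤ_p`, the series `(1+x)^y = Σ C(y,n) xⁿ ∈ F_p[[x]]` is a rational function of `x`
iff `y` is a rational integer. -/
theorem binomialSeries_rational_iff {p : ℕ} [Fact p.Prime] (y : ℤ_[p]) :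
    IsRationalPS (padicBinomialSeries y) ↔ ∃ m : ℤ, y = (m : ℤ_[p]) := by
  constructor
  · exact int_of_rational y
  · rintro ⟨m, hm⟩
    exact isRational_of_int y m hm
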